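/- Let Ω be a domain in C, K ⊂ Ω compact, and z₀ ∈ Ω. Then there exists a constant r with 0 < r < 1 such that for every holomorphic function f on Ω with |f| < 1 on Ω that vanishes to order at least λ at z₀ (λ a positive integer), one has |f(z)| ≤ r^λ for all z ∈ K. -/

import Mathlib

open Metric Set Complex

/-- Hadamard three-circles / two-constants theorem, derived from the three-lines theorem. -/
lemma three_circles {f : ℂ → ℂ} {u : ℂ} {s t S m M : ℝ}
    (hs : 0 < s) (hst : s ≤ t) (htS : t < S) (hm0 : 0 < m) (hmM : m ≤ M)
    (hd : DifferentiableOn ℂ f (ball u S)) (hc : ContinuousOn f (closedBall u S))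
    (hm : ∀ z ∈ sphere u s, ‖f z‖ ≤ m)
    (hM : ∀ z ∈ closedBall u S, ‖f z‖ ≤ M) :
    ∀ z ∈ closedBall u t,
      ‖f z‖ ≤ m ^ (Real.log (S/t) / Real.log (S/s)) * M ^ (1 - Real.log (S/t) / Real.log (S/s)) := by
  have ht0 : 0 < t := hs.trans_le hst
  have hS0 : 0 < S := ht0.trans htS
  have hM0 : 0 < M := hm0.trans_le hmM
  set α : ℝ := Real.log (S/t) / Real.log (S/s) with hα
  set L : ℝ := Real.log (S/s) with hL
  have hL0 : 0 < L := Real.log_pos (by rw [lt_div_iff₀ hs]; nlinarith)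
  have hα0 : 0 ≤ α := by
    apply div_nonneg _ hL0.le
    exact Real.log_nonneg (by rw [le_div_iff₀ ht0]; nlinarith)
  have hα1 : α ≤ 1 := by
    rw [hα, div_le_one hL0, hL]
    apply Real.log_le_log (by positivity)
    gcongr
  -- the easy bound  m ≤ m^α * M^(1-α)
  have key : m ≤ m ^ α * M ^ (1 - α) := by
    calc m = m ^ α * m ^ (1 - α) := by
            rw [← Real.rpow_add hm0, add_sub_cancel, Real.rpow_one]
      _ ≤ m ^ α * M ^ (1 - α) := by
            have := Real.rpow_le_rpow hm0.le hmM (sub_nonneg.2 hα1)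
            exact mul_le_mul_of_nonneg_left this (Real.rpow_nonneg hm0.le α)
  intro z hz
  rcases lt_or_ge (dist z u) s with hin | hout
  · -- maximum modulus on the small disk
    have hmax : ‖f z‖ ≤ m := by
      apply Complex.norm_le_of_forall_mem_frontier_norm_le isBounded_ball
        (U := ball u s) ⟨hd.mono (ball_subset_ball (by linarith)), ?_⟩
      · rw [frontier_ball u hs.ne']; exact hm
      · rw [closure_ball u hs.ne']; exact mem_closedBall.2 hin.le
      · rw [closure_ball u hs.ne']
        exact hc.mono (closedBall_subset_closedBall (by linarith))
    exact hmax.trans key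
  · -- the three lines argument
    have hzu : z - u ≠ 0 := by
      intro h
      rw [sub_eq_zero] at h
      rw [h, dist_self] at hout; linarith
    -- the exponential change of variables
    set g : ℂ → ℂ := fun w => f (u + (s : ℂ) * Complex.exp (w * (L : ℂ))) with hg
    have hradius : ∀ w : ℂ, dist (u + (s : ℂ) * Complex.exp (w * (L : ℂ))) u
        = s * Real.exp (w.re * L) := by
      intro w
      rw [dist_eq_norm, add_sub_cancel_left, norm_mul, Complex.norm_exp, Complex.norm_real,
        Real.norm_eq_abs, abs_of_pos hs]
      congr 1
      simp [Complex.mul_re, Complex.ofReal_re, Complex.ofReal_im]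
    have hSs : Real.exp L = S / s := Real.exp_log (by positivity)
    have hmapsb : ∀ w : ℂ, w.re < 1 → (u + (s : ℂ) * Complex.exp (w * (L : ℂ))) ∈ ball u S := by
      intro w hw
      rw [mem_ball, hradius]
      calc s * Real.exp (w.re * L) < s * Real.exp L := by
            have h1 : w.re * L < 1 * L := mul_lt_mul_of_pos_right hw hL0
            exact mul_lt_mul_of_pos_left (Real.exp_lt_exp.2 (by linarith)) hs
        _ = S := by rw [hSs]; field_simp
    have hmapsc : ∀ w : ℂ, w.re ≤ 1 → (u + (s : ℂ) * Complex.exp (w * (L : ℂ))) ∈ closedBall u S := by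
      intro w hw
      rw [mem_closedBall, hradius]
      calc s * Real.exp (w.re * L) ≤ s * Real.exp L := by
            have h1 : w.re * L ≤ 1 * L := mul_le_mul_of_nonneg_right hw hL0.le
            exact mul_le_mul_of_nonneg_left (Real.exp_le_exp.2 (by linarith)) hs.le
        _ = S := by rw [hSs]; field_simp
    have hclos : closure (Complex.HadamardThreeLines.verticalStrip 0 1)
        ⊆ Complex.HadamardThreeLines.verticalClosedStrip 0 1 := by
      rw [Complex.HadamardThreeLines.verticalClosedStrip, ← closure_Ioo zero_ne_one,
        ← Complex.closure_preimage_re]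
      rfl
    have hdiffg : DiffContOnCl ℂ g (Complex.HadamardThreeLines.verticalStrip 0 1) := by
      constructor
      · apply hd.comp
        · apply Differentiable.differentiableOn
          apply Differentiable.const_add
          exact (Complex.differentiable_exp.comp (differentiable_id.mul_const _)).const_mul _
        · intro w hw
          exact hmapsb w hw.2
      · apply hc.comp
        · apply Continuous.continuousOn
          continuity
        · intro w hw
          exact hmapsc w (hclos hw).2
    have hBg : BddAbove ((norm ∘ g) '' Complex.HadamardThreeLines.verticalClosedStrip 0 1) := by
      refine ⟨M, ?_⟩
      rintro y ⟨w, hw, rfl⟩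
      exact hM _ (hmapsc w hw.2)
    have hedge0 : ∀ w ∈ Complex.re ⁻¹' {0}, ‖g w‖ ≤ m := by
      intro w hw
      apply hm
      rw [mem_sphere, hradius, Set.mem_preimage, Set.mem_singleton_iff] at *
      rw [hw]
      simp
    have hedge1 : ∀ w ∈ Complex.re ⁻¹' {1}, ‖g w‖ ≤ M := by
      intro w hw
      apply hM
      apply hmapsc
      rw [Set.mem_preimage, Set.mem_singleton_iff] at hw
      rw [hw]
    -- the point in the strip corresponding to z
    set w₀ : ℂ := Complex.log ((z - u) / s) / (L : ℂ) with hw₀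
    have hLne : (L : ℂ) ≠ 0 := by
      simp only [ne_eq, Complex.ofReal_eq_zero]
      exact hL0.ne'
    have hw₀L : w₀ * (L : ℂ) = Complex.log ((z - u) / s) := by
      rw [hw₀, div_mul_cancel₀ _ hLne]
    have hgw₀ : g w₀ = f z := by
      show f (u + (s:ℂ) * Complex.exp (w₀ * (L:ℂ))) = f z
      rw [hw₀L, Complex.exp_log (div_ne_zero hzu (by simpa using hs.ne'))]
      have hsne : (s:ℂ) ≠ 0 := by simpa using hs.ne'
      congr 1
      field_simp
      ring
    have hre : w₀.re = Real.log (dist z u / s) / L := by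
      rw [hw₀, Complex.div_ofReal_re, Complex.log_re, norm_div, Complex.norm_real,
        Real.norm_eq_abs, abs_of_pos hs, ← dist_eq_norm]
    have hds : 0 < dist z u := lt_of_lt_of_le hs hout
    have hx0 : 0 ≤ w₀.re := by
      rw [hre]
      apply div_nonneg _ hL0.le
      exact Real.log_nonneg (by rw [le_div_iff₀ hs]; linarith)
    have hx1 : w₀.re ≤ 1 - α := by
      rw [hre, hα, hL]
      rw [div_le_iff₀ hL0]
      have h1 : Real.log (dist z u / s) ≤ Real.log (t / s) :=
        Real.log_le_log (by positivity) (by gcongr; exact mem_closedBall.1 hz)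
      have h2 : Real.log (t/s) + Real.log (S/t) = Real.log (S/s) := by
        rw [← Real.log_mul (by positivity) (by positivity)]
        congr 1
        field_simp
      have h3 : (1 - Real.log (S / t) / Real.log (S / s)) * Real.log (S / s)
          = Real.log (S/s) - Real.log (S/t) := by
        have hL0' : Real.log (S / s) ≠ 0 := hL0.ne'
        rw [sub_mul, one_mul, div_mul_cancel₀ _ hL0']
      rw [h3, ← h2]
      simpa using h1
    have hx1' : w₀.re ≤ 1 := le_trans hx1 (by linarith)
    have hmem : w₀ ∈ Complex.HadamardThreeLines.verticalClosedStrip 0 1 := ⟨hx0, hx1'⟩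
    have hthree := Complex.HadamardThreeLines.norm_le_interp_of_mem_verticalClosedStrip₀₁' g
      hmem hdiffg hBg hedge0 hedge1
    rw [hgw₀] at hthree
    refine hthree.trans ?_
    -- m ^ (1 - x) * M ^ x ≤ m ^ α * M ^ (1 - α)
    have hsw : m ^ (1 - w₀.re) * M ^ w₀.re ≤ m ^ α * M ^ (1 - α) := by
      have e1 : m ^ (1 - w₀.re) = m ^ α * m ^ (1 - w₀.re - α) := by
        rw [← Real.rpow_add hm0]; ring_nf
      have e2 : m ^ (1 - w₀.re - α) ≤ M ^ (1 - w₀.re - α) :=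
        Real.rpow_le_rpow hm0.le hmM (by linarith)
      have e3 : M ^ (1 - w₀.re - α) * M ^ w₀.re = M ^ (1 - α) := by
        rw [← Real.rpow_add hM0]; ring_nf
      calc m ^ (1 - w₀.re) * M ^ w₀.re = m ^ α * (m ^ (1 - w₀.re - α) * M ^ w₀.re) := by
            rw [e1]; ring
        _ ≤ m ^ α * (M ^ (1 - w₀.re - α) * M ^ w₀.re) := by
            have : m ^ (1 - w₀.re - α) * M ^ w₀.re ≤ M ^ (1 - w₀.re - α) * M ^ w₀.re :=
              mul_le_mul_of_nonneg_right e2 (Real.rpow_nonneg hM0.le _)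
            exact mul_le_mul_of_nonneg_left this (Real.rpow_nonneg hm0.le _)
        _ = m ^ α * M ^ (1 - α) := by rw [e3]
    exact hsw

open Metric Set Complex

lemma initial_bound {f : ℂ → ℂ} {z₀ : ℂ} {R : NNReal} (hR : 0 < R)
    (hd : DifferentiableOn ℂ f (closedBall z₀ (R:ℝ)))
    (hb : ∀ z ∈ closedBall z₀ (R:ℝ), ‖f z‖ ≤ 1)
    {lam : ℕ} (hlam : 0 < lam) (hvan : ∀ ν < lam, iteratedDeriv ν f z₀ = 0) :
    ∀ z ∈ closedBall z₀ ((R:ℝ)/32), ‖f z‖ ≤ (16⁻¹ : ℝ) ^ lam := by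
  have hR0 : (0:ℝ) < R := hR
  set p := cauchyPowerSeries f z₀ R with hp
  have hps : HasFPowerSeriesOnBall f p z₀ R := hd.hasFPowerSeriesOnBall hR
  -- Cauchy coefficient bound
  have hcoef : ∀ k, ‖p k fun _ => (1:ℂ)‖ ≤ ((R:ℝ))⁻¹ ^ k := by
    intro k
    have h1 : ‖p k fun _ => (1:ℂ)‖ ≤ ‖p k‖ := by
      have := (p k).le_opNorm (fun _ => (1:ℂ))
      simpa using this
    have h2 := norm_cauchyPowerSeries_le f z₀ R k
    have hcont : ContinuousOn (fun θ : ℝ => ‖f (circleMap z₀ R θ)‖) (Set.uIcc 0 (2*Real.pi)) := by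
      apply ContinuousOn.norm
      apply hd.continuousOn.comp (Continuous.continuousOn (continuous_circleMap _ _))
      intro θ _
      exact sphere_subset_closedBall (circleMap_mem_sphere z₀ hR0.le θ)
    have hint : (∫ θ : ℝ in (0)..2 * Real.pi, ‖f (circleMap z₀ R θ)‖) ≤ 2 * Real.pi := by
      have := intervalIntegral.integral_mono_on (f := fun θ : ℝ => ‖f (circleMap z₀ R θ)‖)
        (g := fun _ : ℝ => (1:ℝ)) Real.two_pi_pos.le hcont.intervalIntegrable
        (intervalIntegrable_const : IntervalIntegrable (fun _ : ℝ => (1:ℝ)) MeasureTheory.volume 0 (2*Real.pi))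
        (fun θ _ => hb _ (sphere_subset_closedBall (circleMap_mem_sphere z₀ hR0.le θ)))
      simpa using this
    have h3 : (2 * Real.pi)⁻¹ * (∫ θ : ℝ in (0)..2 * Real.pi, ‖f (circleMap z₀ R θ)‖) ≤ 1 := by
      rw [inv_mul_le_iff₀ Real.two_pi_pos, mul_one]
      exact hint
    calc ‖p k fun _ => (1:ℂ)‖ ≤ ‖p k‖ := h1
      _ ≤ ((2 * Real.pi)⁻¹ * ∫ θ : ℝ in (0)..2 * Real.pi, ‖f (circleMap z₀ R θ)‖) * |(R:ℝ)|⁻¹ ^ k := h2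
      _ ≤ 1 * |(R:ℝ)|⁻¹ ^ k := by
          apply mul_le_mul_of_nonneg_right h3
          positivity
      _ = ((R:ℝ))⁻¹ ^ k := by rw [one_mul, abs_of_pos hR0]
  -- coefficients below lam vanish
  have hvan' : ∀ k < lam, (p k fun _ => (1:ℂ)) = 0 := by
    intro k hk
    have h1 := hps.factorial_smul (1:ℂ) k
    rw [← iteratedDeriv_eq_iteratedFDeriv, hvan k hk] at h1
    rw [nsmul_eq_mul] at h1
    have hk0 : ((k.factorial : ℂ)) ≠ 0 := by
      exact_mod_cast (Nat.factorial_ne_zero k)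
    exact (mul_eq_zero.mp h1).resolve_left hk0
  intro z hz
  set y := z - z₀ with hy
  have hzy : z₀ + y = z := by rw [hy]; ring
  have hynorm : ‖y‖ ≤ (R:ℝ)/32 := by
    rw [hy, ← dist_eq_norm]
    exact mem_closedBall.1 hz
  have hylt : ‖y‖ < (R:ℝ) := lt_of_le_of_lt hynorm (by linarith)
  have hsum : HasSum (fun k => p k fun _ => y) (f (z₀ + y)) := by
    apply hps.hasSum
    rw [EMetric.mem_ball, edist_zero_right]
    exact_mod_cast hylt
  have hterm : ∀ k, (p k fun _ => y) = y ^ k • (p k fun _ => (1:ℂ)) := by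
    intro k
    have h := (p k).map_smul_univ (fun _ : Fin k => y) (fun _ => (1:ℂ))
    simpa [smul_eq_mul] using h
  have hnorm : ∀ k, ‖p k fun _ => y‖ = ‖y‖ ^ k * ‖p k fun _ => (1:ℂ)‖ := by
    intro k
    rw [hterm k, norm_smul, norm_pow]
  have hzero : ∀ k < lam, (p k fun _ => y) = 0 := by
    intro k hk; rw [hterm k, hvan' k hk, smul_zero]
  have hsum2 : HasSum (fun j => p (j + lam) fun _ => y) (f (z₀ + y)) := by
    refine (hasSum_nat_add_iff (f := fun k => (p k) fun _ => y) lam).2 ?_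
    rw [Finset.sum_eq_zero (fun i hi => hzero i (Finset.mem_range.1 hi)), add_zero]
    exact hsum
  set x : ℝ := ‖y‖ * ((R:ℝ))⁻¹ with hx
  have hx0 : 0 ≤ x := by positivity
  have hx32 : x ≤ 32⁻¹ := by
    calc x ≤ ((R:ℝ)/32) * ((R:ℝ))⁻¹ := mul_le_mul_of_nonneg_right hynorm (by positivity)
      _ = 32⁻¹ := by field_simp
  have hxlt : x < 1 := lt_of_le_of_lt hx32 (by norm_num)
  have hub : ∀ j, ‖p (j + lam) fun _ => y‖ ≤ x ^ lam * x ^ j := by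
    intro j
    rw [hnorm]
    calc ‖y‖ ^ (j + lam) * ‖p (j + lam) fun _ => (1:ℂ)‖
        ≤ ‖y‖ ^ (j + lam) * ((R:ℝ))⁻¹ ^ (j + lam) :=
          mul_le_mul_of_nonneg_left (hcoef (j + lam)) (by positivity)
      _ = x ^ (j + lam) := by rw [hx, mul_pow]
      _ = x ^ lam * x ^ j := by rw [← pow_add, add_comm j lam]
  have hgeo : Summable (fun j : ℕ => x ^ lam * x ^ j) :=
    (summable_geometric_of_lt_one hx0 hxlt).mul_left _
  have hsummable : Summable (fun j => ‖p (j + lam) fun _ => y‖) :=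
    Summable.of_nonneg_of_le (fun j => norm_nonneg _) hub hgeo
  have hle1 : ‖f (z₀ + y)‖ ≤ ∑' j : ℕ, x ^ lam * x ^ j := by
    rw [← hsum2.tsum_eq]
    exact (norm_tsum_le_tsum_norm hsummable).trans (Summable.tsum_le_tsum hub hsummable hgeo)
  have hle2 : (∑' j : ℕ, x ^ lam * x ^ j) = x ^ lam * (1 - x)⁻¹ := by
    rw [tsum_mul_left, tsum_geometric_of_lt_one hx0 hxlt]
  have hfinal : x ^ lam * (1 - x)⁻¹ ≤ (16⁻¹:ℝ) ^ lam := by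
    have h1 : x ^ lam ≤ (32⁻¹:ℝ) ^ lam := pow_le_pow_left₀ hx0 hx32 lam
    have h2 : (1 - x)⁻¹ ≤ 2 := by
      rw [inv_le_comm₀ (by linarith [hx32] : (0:ℝ) < 1 - x) (by norm_num : (0:ℝ) < 2)]
      have : x ≤ 1/2 := le_trans hx32 (by norm_num)
      linarith
    calc x ^ lam * (1 - x)⁻¹ ≤ (32⁻¹:ℝ) ^ lam * 2 := by
          exact mul_le_mul h1 h2 (inv_nonneg.2 (by linarith [hx32])) (by positivity)
      _ ≤ (32⁻¹:ℝ) ^ lam * 2 ^ lam := by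
          have h4 : (2:ℝ) ≤ 2 ^ lam := by
            calc (2:ℝ) = 2 ^ 1 := (pow_one 2).symm
              _ ≤ 2 ^ lam := pow_le_pow_right₀ (by norm_num) hlam
          exact mul_le_mul_of_nonneg_left h4 (by positivity)
      _ = (16⁻¹:ℝ) ^ lam := by
          rw [← mul_pow]; norm_num
  rw [← hzy] at *
  calc ‖f (z₀ + y)‖ ≤ ∑' j : ℕ, x ^ lam * x ^ j := hle1
    _ = x ^ lam * (1 - x)⁻¹ := hle2
    _ ≤ (16⁻¹:ℝ) ^ lam := hfinal

/-- The set of points near which the uniform bound `c ^ lam` (some `c < 1`) holds. -/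
def GoodSet (Ω : Set ℂ) (z₀ : ℂ) : Set ℂ :=
  {w | w ∈ Ω ∧ ∃ c : ℝ, 0 < c ∧ c < 1 ∧ ∃ ρ : ℝ, 0 < ρ ∧ Metric.closedBall w ρ ⊆ Ω ∧
    ∀ f : ℂ → ℂ, DifferentiableOn ℂ f Ω → (∀ z ∈ Ω, ‖f z‖ < 1) →
    ∀ lam : ℕ, 0 < lam → (∀ ν < lam, iteratedDeriv ν f z₀ = 0) →
    ∀ z ∈ Metric.closedBall w ρ, ‖f z‖ ≤ c ^ lam}

lemma goodSet_open (Ω : Set ℂ) (z₀ : ℂ) : IsOpen (GoodSet Ω z₀) := by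
  rw [Metric.isOpen_iff]
  rintro w ⟨hwΩ, c, hc0, hc1, ρ, hρ0, hρΩ, hbd⟩
  refine ⟨ρ/2, by linarith, ?_⟩
  intro w' hw'
  rw [mem_ball] at hw'
  have hsub : closedBall w' (ρ/2) ⊆ closedBall w ρ := by
    intro z hz
    rw [mem_closedBall] at *
    calc dist z w ≤ dist z w' + dist w' w := dist_triangle _ _ _
      _ ≤ ρ/2 + ρ/2 := add_le_add hz hw'.le
      _ = ρ := by ring
  refine ⟨hρΩ (hsub (mem_closedBall_self (by linarith))), c, hc0, hc1, ρ/2, by linarith,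
    hsub.trans hρΩ, ?_⟩
  intro f hf hflt lam hlam hvan z hz
  exact hbd f hf hflt lam hlam hvan z (hsub hz)

lemma goodSet_closure_step (Ω : Set ℂ) (hΩ : IsOpen Ω) (z₀ : ℂ) {w : ℂ} (hwΩ : w ∈ Ω)
    (hw : w ∈ closure (GoodSet Ω z₀)) : w ∈ GoodSet Ω z₀ := by
  obtain ⟨ε, hε0, hεΩ⟩ := Metric.isOpen_iff.1 hΩ w hwΩ
  set d : ℝ := ε / 10 with hd
  have hd0 : 0 < d := by positivity
  have h5d : closedBall w (5*d) ⊆ Ω := by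
    refine subset_trans ?_ hεΩ
    intro z hz
    rw [mem_closedBall] at hz
    rw [mem_ball]
    calc dist z w ≤ 5*d := hz
      _ < ε := by rw [hd]; linarith
  obtain ⟨w', hw'good, hww'⟩ := Metric.mem_closure_iff.1 hw d hd0
  obtain ⟨hw'Ω, c', hc'0, hc'1, ρ', hρ'0, hρ'Ω, hbd⟩ := hw'good
  set s : ℝ := min ρ' d with hs
  have hs0 : 0 < s := lt_min hρ'0 hd0
  have hsd : s ≤ d := min_le_right _ _
  have hsρ : s ≤ ρ' := min_le_left _ _
  set α : ℝ := Real.log ((4*d)/(2*d)) / Real.log ((4*d)/s) with hα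
  have hlog2 : Real.log ((4*d)/(2*d)) = Real.log 2 := by
    congr 1
    field_simp
    ring
  have hquot : (1:ℝ) < (4*d)/s := by
    rw [lt_div_iff₀ hs0]
    linarith
  have hα0 : 0 < α := by
    rw [hα, hlog2]
    exact div_pos (Real.log_pos (by norm_num)) (Real.log_pos hquot)
  have hα1 : α ≤ 1 := by
    rw [hα, hlog2, div_le_one (Real.log_pos hquot)]
    apply Real.log_le_log (by norm_num)
    rw [le_div_iff₀ hs0]
    linarith
  have hball4 : closedBall w' (4*d) ⊆ Ω := by
    refine subset_trans ?_ h5d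
    intro z hz
    rw [mem_closedBall] at *
    calc dist z w ≤ dist z w' + dist w' w := dist_triangle _ _ _
      _ ≤ 4*d + d := add_le_add hz (by rw [dist_comm]; exact hww'.le)
      _ = 5*d := by ring
  have hsubd : closedBall w d ⊆ closedBall w' (2*d) := by
    intro z hz
    rw [mem_closedBall] at *
    calc dist z w' ≤ dist z w + dist w w' := dist_triangle _ _ _
      _ ≤ d + d := add_le_add hz hww'.le
      _ = 2*d := by ring
  refine ⟨hwΩ, c' ^ α, Real.rpow_pos_of_pos hc'0 α, Real.rpow_lt_one hc'0.le hc'1 hα0,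
    d, hd0, ?_, ?_⟩
  · intro z hz
    exact h5d (closedBall_subset_closedBall (by linarith) hz)
  · intro f hf hflt lam hlam hvan z hz
    have h3 := three_circles (u := w') (s := s) (t := 2*d) (S := 4*d)
      (m := c' ^ lam) (M := 1) hs0 (by linarith) (by linarith)
      (pow_pos hc'0 lam) (pow_le_one₀ hc'0.le hc'1.le)
      (hf.mono (ball_subset_closedBall.trans hball4))
      (hf.continuousOn.mono hball4)
      (fun ζ hζ => hbd f hf hflt lam hlam hvan ζ
        (closedBall_subset_closedBall hsρ (sphere_subset_closedBall hζ)))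
      (fun ζ hζ => (hflt ζ (hball4 hζ)).le)
      z (hsubd hz)
    rw [Real.one_rpow, mul_one] at h3
    refine h3.trans ?_
    have : ((c' ^ lam : ℝ)) ^ (Real.log ((4*d)/(2*d)) / Real.log ((4*d)/s)) = (c' ^ α) ^ lam := by
      rw [← hα, ← Real.rpow_natCast c' lam, ← Real.rpow_mul hc'0.le, mul_comm,
        Real.rpow_mul hc'0.le, Real.rpow_natCast]
    rw [this]

/-- Schwarz-type lemma: a bounded holomorphic function vanishing to order λ at z₀
is bounded by r^λ on a compact subset. -/
theorem stmt_1 (Ω : Set ℂ) (hΩ : IsOpen Ω) (hconn : IsConnected Ω)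
    (K : Set ℂ) (hK : IsCompact K) (hKΩ : K ⊆ Ω) (z₀ : ℂ) (hz₀ : z₀ ∈ Ω) :
    ∃ r : ℝ, 0 < r ∧ r < 1 ∧ ∀ f : ℂ → ℂ, DifferentiableOn ℂ f Ω →
      (∀ z ∈ Ω, ‖f z‖ < 1) → ∀ lam : ℕ, 0 < lam →
      (∀ ν < lam, iteratedDeriv ν f z₀ = 0) → ∀ z ∈ K, ‖f z‖ ≤ r ^ lam := by
  -- z₀ is good
  obtain ⟨ε, hε0, hεΩ⟩ := Metric.isOpen_iff.1 hΩ z₀ hz₀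
  set R : ℝ := ε / 2 with hR
  have hR0 : 0 < R := by positivity
  have hRΩ : closedBall z₀ R ⊆ Ω := by
    refine subset_trans ?_ hεΩ
    intro z hz
    rw [mem_closedBall] at hz
    rw [mem_ball]
    calc dist z z₀ ≤ R := hz
      _ < ε := by rw [hR]; linarith
  have hz₀good : z₀ ∈ GoodSet Ω z₀ := by
    refine ⟨hz₀, 16⁻¹, by norm_num, by norm_num, R/32, by positivity, ?_, ?_⟩
    · exact (closedBall_subset_closedBall (by linarith)).trans hRΩ
    · intro f hf hflt lam hlam hvan z hz
      have hcoe : ((R.toNNReal : ℝ)) = R := Real.coe_toNNReal R hR0.le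
      have := initial_bound (R := R.toNNReal) (by simp [Real.toNNReal_pos.2 hR0])
        (by rw [hcoe]; exact hf.mono hRΩ)
        (by rw [hcoe]; exact fun ζ hζ => (hflt ζ (hRΩ hζ)).le) hlam hvan z
        (by rw [hcoe]; exact hz)
      exact this
  -- clopen argument:  Ω ⊆ GoodSet Ω z₀
  have hsub : Ω ⊆ GoodSet Ω z₀ := by
    set U := GoodSet Ω z₀ with hU
    set V := (closure U)ᶜ with hV
    have hUopen : IsOpen U := goodSet_open Ω z₀
    have hVopen : IsOpen V := isClosed_closure.isOpen_compl
    have hcover : Ω ⊆ U ∪ V := by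
      intro x hx
      by_cases hc : x ∈ closure U
      · exact Or.inl (goodSet_closure_step Ω hΩ z₀ hx hc)
      · exact Or.inr hc
    have hVempty : ¬(Ω ∩ V).Nonempty := by
      intro hne
      obtain ⟨x, hx, hxU, hxV⟩ := hconn.isPreconnected U V hUopen hVopen hcover
        ⟨z₀, hz₀, hz₀good⟩ hne
      exact hxV (subset_closure hxU)
    intro x hx
    rcases hcover hx with h | h
    · exact h
    · exact absurd ⟨x, hx, h⟩ hVempty
  -- compactness argument
  have hgood : ∀ z : ℂ, z ∈ K → ∃ c : ℝ, 0 < c ∧ c < 1 ∧ ∃ ρ : ℝ, 0 < ρ ∧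
      Metric.closedBall z ρ ⊆ Ω ∧
      ∀ f : ℂ → ℂ, DifferentiableOn ℂ f Ω → (∀ ζ ∈ Ω, ‖f ζ‖ < 1) →
      ∀ lam : ℕ, 0 < lam → (∀ ν < lam, iteratedDeriv ν f z₀ = 0) →
      ∀ ζ ∈ Metric.closedBall z ρ, ‖f ζ‖ ≤ c ^ lam := fun z hz => (hsub (hKΩ hz)).2
  choose c hc0 hc1 ρ hρ0 hρΩ hbd using hgood
  obtain ⟨t, hcov⟩ := hK.elim_nhds_subcover' (fun z hz => ball z (ρ z hz))
    (fun z hz => ball_mem_nhds _ (hρ0 z hz))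
  set r : ℝ := max 2⁻¹ (t.fold max 0 (fun x => c x.1 x.2)) with hr
  have hr0 : 0 < r := lt_of_lt_of_le (by norm_num) (le_max_left _ _)
  have hr1 : r < 1 := by
    rw [hr, max_lt_iff]
    constructor
    · norm_num
    · rw [Finset.fold_max_lt]
      exact ⟨by norm_num, fun x _ => hc1 x.1 x.2⟩
  refine ⟨r, hr0, hr1, ?_⟩
  intro f hf hflt lam hlam hvan z hz
  obtain ⟨x, hxt, hxz⟩ := Set.mem_iUnion₂.1 (hcov hz)
  have hcr : c x.1 x.2 ≤ r := by
    rw [hr]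
    apply le_max_of_le_right
    rw [Finset.le_fold_max]
    exact Or.inr ⟨x, hxt, le_refl _⟩
  calc ‖f z‖ ≤ (c x.1 x.2) ^ lam :=
        hbd x.1 x.2 f hf hflt lam hlam hvan z (ball_subset_closedBall hxz)
    _ ≤ r ^ lam := pow_le_pow_left₀ (hc0 x.1 x.2).le hcr lam
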